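/- arXiv:1410.6033 — 2 statements merged into one kernel-verified Lean document; each statement's English description precedes it below -/
import Mathlib

section
/- Let G : ℝ^k → ℝ be twice continuously differentiable on a neighborhood of 0. Then u^{k+2} ( ∫_{‖x‖<1/u} G(x) dx − Vol(B_k) G(0) u^{−k} ) → Vol(B_k) · tr(Hess G(0)) / (2(k+2)) as u → ∞. -/
open MeasureTheory Filter

/-- The volume of the unit ball in `ℝ^k`. -/
noncomputable def unitBallVol (k : ℕ) : ℝ :=
  (volume (Metric.ball (0 : EuclideanSpace ℝ (Fin k)) 1)).toReal

section Aux
open Metric Asymptotics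


lemma taylor2_isLittleO {E : Type*} [NormedAddCommGroup E] [NormedSpace ℝ E] {f : E → ℝ}
    {B : E →L[ℝ] E →L[ℝ] ℝ}
    (hd : ∀ᶠ y in nhds (0:E), DifferentiableAt ℝ f y)
    (hB : HasFDerivAt (fderiv ℝ f) B 0) :
    (fun x => f x - f 0 - fderiv ℝ f 0 x - B x x / 2) =o[nhds 0] fun x => ‖x‖ ^ 2 := by
  have hsymm : ∀ v w, B v w = B w v :=
    second_derivative_symmetric_of_eventually (hd.mono fun y hy => hy.hasFDerivAt) hB
  rw [Asymptotics.isLittleO_iff]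
  intro ε hε
  have h1 : (fun y : E => fderiv ℝ f y - fderiv ℝ f 0 - B y) =o[nhds 0] fun y => y := by
    have := hasFDerivAt_iff_isLittleO_nhds_zero.1 hB
    simpa using this
  have h2 : ∀ᶠ y in nhds (0:E), ‖fderiv ℝ f y - fderiv ℝ f 0 - B y‖ ≤ ε * ‖y‖ :=
    (Asymptotics.isLittleO_iff.1 h1) hε
  rcases Metric.eventually_nhds_iff_ball.1 (h2.and hd) with ⟨δ, hδpos, hδ⟩
  have key : ∀ x : E, ‖x‖ < δ → ‖f x - f 0 - fderiv ℝ f 0 x - B x x / 2‖ ≤ ε * ‖x‖ ^ 2 := by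
    intro x hx
    set g : E → ℝ := fun y => f y - fderiv ℝ f 0 y - B y y / 2 with hg
    set φ : E → E →L[ℝ] ℝ := fun y => fderiv ℝ f y - fderiv ℝ f 0 - B y with hφ
    have hsub : closedBall (0:E) ‖x‖ ⊆ ball 0 δ := by
      intro y hy
      rw [mem_closedBall_zero_iff] at hy
      rw [mem_ball_zero_iff]
      exact lt_of_le_of_lt hy hx
    have hbil := (B.isBoundedBilinearMap).hasFDerivAt
    have hgd : ∀ y ∈ closedBall (0:E) ‖x‖, HasFDerivWithinAt g (φ y) (closedBall 0 ‖x‖) y := by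
      intro y hy
      have hyδ := hsub hy
      have hfd : HasFDerivAt f (fderiv ℝ f y) y := (hδ y hyδ).2.hasFDerivAt
      have hdiag : HasFDerivAt (fun y : E => (y, y))
          ((ContinuousLinearMap.id ℝ E).prod (ContinuousLinearMap.id ℝ E)) y :=
        HasFDerivAt.prodMk (hasFDerivAt_id y) (hasFDerivAt_id y)
      have hq : HasFDerivAt (fun y : E => B y y)
          (((B.isBoundedBilinearMap).deriv (y, y)).comp
            ((ContinuousLinearMap.id ℝ E).prod (ContinuousLinearMap.id ℝ E))) y := by
        have h' : HasFDerivAt ((fun p : E × E => B p.1 p.2) ∘ (fun y : E => (y, y)))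
            (((B.isBoundedBilinearMap).deriv (y, y)).comp
              ((ContinuousLinearMap.id ℝ E).prod (ContinuousLinearMap.id ℝ E))) y :=
          HasFDerivAt.comp y (hbil (y, y)) hdiag
        exact h'
      have hq2 : HasFDerivAt (fun y : E => B y y / 2)
          ((2⁻¹ : ℝ) • (((B.isBoundedBilinearMap).deriv (y, y)).comp
            ((ContinuousLinearMap.id ℝ E).prod (ContinuousLinearMap.id ℝ E)))) y := by
        have := hq.const_mul (2⁻¹ : ℝ)
        simpa [div_eq_inv_mul] using this
      have := (hfd.sub ((fderiv ℝ f 0).hasFDerivAt)).sub hq2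
      have heq : fderiv ℝ f y - fderiv ℝ f 0 -
          ((2⁻¹ : ℝ) • (((B.isBoundedBilinearMap).deriv (y, y)).comp
            ((ContinuousLinearMap.id ℝ E).prod (ContinuousLinearMap.id ℝ E)))) = φ y := by
        ext v
        simp [IsBoundedBilinearMap.deriv_apply, hφ, hsymm v y]
        ring
      rw [heq] at this
      exact this.hasFDerivWithinAt
    have hbound : ∀ y ∈ closedBall (0:E) ‖x‖, ‖φ y‖ ≤ ε * ‖x‖ := by
      intro y hy
      have hyδ := hsub hy
      refine le_trans (hδ y hyδ).1 ?_
      have : ‖y‖ ≤ ‖x‖ := mem_closedBall_zero_iff.1 hy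
      exact mul_le_mul_of_nonneg_left this hε.le
    have := Convex.norm_image_sub_le_of_norm_hasFDerivWithin_le hgd hbound
      (convex_closedBall 0 ‖x‖) (mem_closedBall_self (norm_nonneg x))
      (mem_closedBall_zero_iff.2 le_rfl)
    have hg0 : g 0 = f 0 := by simp [hg]
    rw [hg0, sub_zero] at this
    calc ‖f x - f 0 - fderiv ℝ f 0 x - B x x / 2‖
        = ‖g x - f 0‖ := by rw [hg]; ring_nf
      _ ≤ ε * ‖x‖ * ‖x‖ := this
      _ = ε * ‖x‖ ^ 2 := by ring
  filter_upwards [Metric.eventually_nhds_iff_ball.2 ⟨δ, hδpos, fun y hy => mem_ball_zero_iff.1 hy⟩]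
    with x hx
  have := key x hx
  simpa [abs_of_nonneg (sq_nonneg ‖x‖)] using this

open intervalIntegral in
lemma my_integral_pow (n : ℕ) : ∫ x in (0:ℝ)..1, x ^ n = 1 / (n + 1) := by
  rw [integral_pow]; simp
variable {k : ℕ}

lemma isom_setIntegral (e : EuclideanSpace ℝ (Fin k) ≃ₗᵢ[ℝ] EuclideanSpace ℝ (Fin k))
    (f : EuclideanSpace ℝ (Fin k) → ℝ) (r : ℝ) :
    ∫ x in ball (0 : EuclideanSpace ℝ (Fin k)) r, f (e x) = ∫ x in ball 0 r, f x := by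
  have h1 : ⇑e '' ball 0 r = ball 0 r := by
    have := e.toIsometryEquiv.image_ball 0 r
    simpa [LinearIsometryEquiv.coe_toIsometryEquiv] using this
  conv_rhs => rw [← h1,
    e.measurePreserving.setIntegral_image_emb e.toHomeomorph.measurableEmbedding f (ball 0 r)]

lemma vol_ball (hk : 1 ≤ k) {r : ℝ} (hr : 0 ≤ r) :
    (volume (ball (0 : EuclideanSpace ℝ (Fin k)) r)).toReal = r ^ k * unitBallVol k := by
  haveI : Nonempty (Fin k) := ⟨⟨0, hk⟩⟩
  rw [Measure.addHaar_ball volume 0 hr, finrank_euclideanSpace_fin, ENNReal.toReal_mul,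
    ENNReal.toReal_ofReal (pow_nonneg hr k), unitBallVol]

lemma integral_norm_sq (hk : 1 ≤ k) :
    ∫ x in ball (0 : EuclideanSpace ℝ (Fin k)) 1, ‖x‖ ^ 2
      = k * (unitBallVol k * (1 / (k + 2))) := by
  haveI : Nonempty (Fin k) := ⟨⟨0, hk⟩⟩
  have h := MeasureTheory.integral_fun_norm_addHaar (volume : Measure (EuclideanSpace ℝ (Fin k)))
      (Set.indicator (Set.Iio (1:ℝ)) (fun y => y ^ 2))
  rw [finrank_euclideanSpace_fin] at h
  have hL : (∫ x, Set.indicator (Set.Iio (1:ℝ)) (fun y => y ^ 2) ‖x‖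
        ∂(volume : Measure (EuclideanSpace ℝ (Fin k))))
      = ∫ x in ball (0 : EuclideanSpace ℝ (Fin k)) 1, ‖x‖ ^ 2 := by
    rw [← integral_indicator measurableSet_ball]
    congr 1
    ext x
    by_cases hx : x ∈ ball (0 : EuclideanSpace ℝ (Fin k)) 1
    · rw [Set.indicator_of_mem hx, Set.indicator_of_mem (by simpa [mem_ball_zero_iff] using hx)]
    · rw [Set.indicator_of_notMem hx,
        Set.indicator_of_notMem (by simpa [mem_ball_zero_iff] using hx)]
  have hR : (∫ y in Set.Ioi (0:ℝ), y ^ (k - 1) • Set.indicator (Set.Iio (1:ℝ)) (fun y => y ^ 2) y)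
      = 1 / (k + 2) := by
    have hpt : (fun y : ℝ => y ^ (k - 1) • Set.indicator (Set.Iio (1:ℝ)) (fun y => y ^ 2) y)
        = Set.indicator (Set.Iio (1:ℝ)) (fun y => y ^ (k + 1)) := by
      funext y
      by_cases hy : y ∈ Set.Iio (1:ℝ)
      · rw [Set.indicator_of_mem hy, Set.indicator_of_mem hy, smul_eq_mul, ← pow_add]
        congr 1
        omega
      · rw [Set.indicator_of_notMem hy, Set.indicator_of_notMem hy, smul_zero]
    rw [hpt, integral_indicator measurableSet_Iio, Measure.restrict_restrict measurableSet_Iio,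
      Set.Iio_inter_Ioi, ← integral_Ioc_eq_integral_Ioo,
      ← intervalIntegral.integral_of_le zero_le_one, my_integral_pow]
    push_cast
    ring
  rw [hL, hR] at h
  rw [h, nsmul_eq_mul, smul_eq_mul]
  rfl

lemma integrableOn_ball_of_continuous {f : EuclideanSpace ℝ (Fin k) → ℝ} (hf : Continuous f)
    (r : ℝ) : IntegrableOn f (ball (0 : EuclideanSpace ℝ (Fin k)) r) volume :=
  (hf.continuousOn.integrableOn_compact (isCompact_closedBall 0 r)).mono_set ball_subset_closedBall

lemma integral_coord_sq (hk : 1 ≤ k) (i : Fin k) :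
    ∫ x in ball (0 : EuclideanSpace ℝ (Fin k)) 1, (x i) ^ 2
      = unitBallVol k * (1 / (k + 2)) := by
  have hcont : ∀ j : Fin k, Continuous (fun x : EuclideanSpace ℝ (Fin k) => (x j) ^ 2) :=
    fun j => ((EuclideanSpace.proj j).continuous).pow 2
  have hswap : ∀ j : Fin k,
      (∫ x in ball (0 : EuclideanSpace ℝ (Fin k)) 1, (x j) ^ 2)
        = ∫ x in ball (0 : EuclideanSpace ℝ (Fin k)) 1, (x i) ^ 2 := by
    intro j
    have h := isom_setIntegral (LinearIsometryEquiv.piLpCongrLeft 2 ℝ ℝ (Equiv.swap j i))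
      (fun x => (x j) ^ 2) 1
    have happ : ∀ x : EuclideanSpace ℝ (Fin k),
        ((LinearIsometryEquiv.piLpCongrLeft 2 ℝ ℝ (Equiv.swap j i)) x) j = x i := by
      intro x
      rw [LinearIsometryEquiv.piLpCongrLeft_apply]
      simp only [Equiv.piCongrLeft'_apply, Equiv.symm_swap]
      rw [Equiv.swap_apply_left]
    simp only [happ] at h
    exact h.symm
  have hsum : ∑ j : Fin k, (∫ x in ball (0 : EuclideanSpace ℝ (Fin k)) 1, (x j) ^ 2)
      = k * (unitBallVol k * (1 / (k + 2))) := by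
    rw [← integral_finset_sum _
      (fun j _ => integrableOn_ball_of_continuous (hcont j) 1), ← integral_norm_sq hk]
    refine integral_congr_ae (Filter.Eventually.of_forall fun x => ?_)
    show ∑ j : Fin k, (x j) ^ 2 = ‖x‖ ^ 2
    rw [EuclideanSpace.norm_eq, Real.sq_sqrt (by positivity)]
    congr 1
    funext j
    rw [Real.norm_eq_abs, sq_abs]
  rw [Finset.sum_congr rfl (fun j _ => hswap j), Finset.sum_const, Finset.card_univ,
    Fintype.card_fin, nsmul_eq_mul] at hsum
  have hk0 : (k : ℝ) ≠ 0 := Nat.cast_ne_zero.2 (by omega)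
  exact mul_left_cancel₀ hk0 hsum

lemma integral_coord_mul {i j : Fin k} (hij : i ≠ j) :
    ∫ x in ball (0 : EuclideanSpace ℝ (Fin k)) 1, (x i) * (x j) = 0 := by
  classical
  set e := LinearIsometryEquiv.piLpCongrRight 2
    (fun t : Fin k => if t = i then LinearIsometryEquiv.neg ℝ (E := ℝ)
      else LinearIsometryEquiv.refl ℝ ℝ) with he
  have h := isom_setIntegral e (fun x => (x i) * (x j)) 1
  have happ : ∀ x : EuclideanSpace ℝ (Fin k), (e x) i * (e x) j = -((x i) * (x j)) := by
    intro x
    have h1 : (e x) i = -(x i) := by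
      simp [he, LinearIsometryEquiv.piLpCongrRight_apply]
    have h2 : (e x) j = x j := by
      simp [he, LinearIsometryEquiv.piLpCongrRight_apply, hij.symm]
    rw [h1, h2]; ring
  simp only [happ] at h
  rw [integral_neg] at h
  linarith

lemma euclidean_repr (x : EuclideanSpace ℝ (Fin k)) :
    x = ∑ i : Fin k, (x i) • EuclideanSpace.single i (1 : ℝ) := by
  have := (EuclideanSpace.basisFun (Fin k) ℝ).sum_repr x
  simp only [EuclideanSpace.basisFun_repr, EuclideanSpace.basisFun_apply] at this
  exact this.symm

lemma integral_ball_linear (D : EuclideanSpace ℝ (Fin k) →L[ℝ] ℝ) (r : ℝ) :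
    ∫ x in ball (0 : EuclideanSpace ℝ (Fin k)) r, D x = 0 := by
  have h := isom_setIntegral (LinearIsometryEquiv.neg ℝ
    (E := EuclideanSpace ℝ (Fin k))) (fun x => D x) r
  have happ : ∀ x : EuclideanSpace ℝ (Fin k),
      D ((LinearIsometryEquiv.neg ℝ (E := EuclideanSpace ℝ (Fin k))) x) = -(D x) := by
    intro x
    show D (-x) = -(D x)
    exact map_neg D x
  simp only [happ] at h
  rw [integral_neg] at h
  linarith

lemma integral_ball_bilin (hk : 1 ≤ k) (B : EuclideanSpace ℝ (Fin k) →L[ℝ]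
      EuclideanSpace ℝ (Fin k) →L[ℝ] ℝ) :
    ∫ x in ball (0 : EuclideanSpace ℝ (Fin k)) 1, B x x
      = (unitBallVol k * (1 / (k + 2))) *
        ∑ i : Fin k, B (EuclideanSpace.single i 1) (EuclideanSpace.single i 1) := by
  classical
  have hrepr : ∀ x : EuclideanSpace ℝ (Fin k), B x x
      = ∑ i : Fin k, ∑ j : Fin k,
          (x i * x j) * B (EuclideanSpace.single i 1) (EuclideanSpace.single j 1) := by
    intro x
    conv_lhs => rw [euclidean_repr x]
    simp only [map_sum, _root_.map_smul, ContinuousLinearMap.sum_apply,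
      ContinuousLinearMap.smul_apply, smul_eq_mul]
    rw [Finset.sum_comm]
    refine Finset.sum_congr rfl fun i _ => ?_
    rw [Finset.mul_sum]
    exact Finset.sum_congr rfl fun j _ => by ring
  have hcont2 : ∀ i j : Fin k, Continuous (fun x : EuclideanSpace ℝ (Fin k) =>
      (x i * x j) * B (EuclideanSpace.single i 1) (EuclideanSpace.single j 1)) := fun i j =>
    ((EuclideanSpace.proj i).continuous.mul (EuclideanSpace.proj j).continuous).mul
      continuous_const
  rw [integral_congr_ae (Filter.Eventually.of_forall fun x => hrepr x),
    integral_finset_sum _ (fun i _ => integrableOn_ball_of_continuous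
      (continuous_finset_sum _ fun j _ => hcont2 i j) 1)]
  rw [Finset.mul_sum]
  refine Finset.sum_congr rfl fun i _ => ?_
  rw [integral_finset_sum _ (fun j _ => integrableOn_ball_of_continuous (hcont2 i j) 1)]
  rw [Finset.sum_eq_single i]
  · rw [integral_mul_const]
    have : (∫ x in ball (0 : EuclideanSpace ℝ (Fin k)) 1, x i * x i)
        = ∫ x in ball (0 : EuclideanSpace ℝ (Fin k)) 1, (x i) ^ 2 :=
      integral_congr_ae (Filter.Eventually.of_forall fun x => by ring)
    rw [this, integral_coord_sq hk i]
  · intro b _ hb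
    rw [integral_mul_const]
    rw [integral_coord_mul (Ne.symm hb), zero_mul]
  · intro h
    exact absurd (Finset.mem_univ i) h


lemma integral_ball_bilin_scale (B : EuclideanSpace ℝ (Fin k) →L[ℝ]
      EuclideanSpace ℝ (Fin k) →L[ℝ] ℝ) {r : ℝ} (hr : 0 < r) :
    ∫ x in ball (0 : EuclideanSpace ℝ (Fin k)) r, B x x
      = r ^ (k + 2) * ∫ x in ball (0 : EuclideanSpace ℝ (Fin k)) 1, B x x := by
  have h := Measure.setIntegral_comp_smul_of_pos (volume)
    (fun x : EuclideanSpace ℝ (Fin k) => B x x) (ball (0 : EuclideanSpace ℝ (Fin k)) 1) hr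
  rw [finrank_euclideanSpace_fin, smul_unitBall_of_pos hr] at h
  have hL : (∫ x in ball (0 : EuclideanSpace ℝ (Fin k)) 1, B (r • x) (r • x))
      = r ^ 2 * ∫ x in ball (0 : EuclideanSpace ℝ (Fin k)) 1, B x x := by
    have hpt : ∀ x : EuclideanSpace ℝ (Fin k), B (r • x) (r • x) = r ^ 2 * B x x := by
      intro x
      rw [B.map_smul, ContinuousLinearMap.smul_apply, (B x).map_smul, smul_eq_mul, smul_eq_mul]
      ring
    rw [integral_congr_ae (Filter.Eventually.of_forall hpt), integral_const_mul]
  rw [hL, smul_eq_mul] at h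
  have hrk : (r : ℝ) ^ k ≠ 0 := pow_ne_zero _ hr.ne'
  have h2 : r ^ k * (r ^ 2 * ∫ x in ball (0 : EuclideanSpace ℝ (Fin k)) 1, B x x)
      = ∫ x in ball (0 : EuclideanSpace ℝ (Fin k)) r, B x x := by
    rw [h, ← mul_assoc, mul_inv_cancel₀ hrk, one_mul]
  rw [← h2, ← mul_assoc, ← pow_add]

end Aux

open Metric in
set_option maxHeartbeats 1000000 in
theorem stmt2 (k : ℕ) (hk : 1 ≤ k) (G : EuclideanSpace ℝ (Fin k) → ℝ)
    (hG : ∃ s ∈ nhds (0 : EuclideanSpace ℝ (Fin k)), ContDiffOn ℝ 2 G s) :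
    Tendsto (fun u : ℝ => u ^ (k + 2) *
        ((∫ x in Metric.ball (0 : EuclideanSpace ℝ (Fin k)) (1 / u), G x)
          - unitBallVol k * G 0 / u ^ k))
      atTop
      (nhds (unitBallVol k *
        (∑ i : Fin k, iteratedFDeriv ℝ 2 G 0
            ![EuclideanSpace.single i 1, EuclideanSpace.single i 1]) / (2 * (k + 2)))) := by
  obtain ⟨s, hs, hGs⟩ := hG
  have hCAt : ContDiffAt ℝ 2 G 0 := hGs.contDiffAt hs
  obtain ⟨u0, hu0, hu0cd⟩ := hCAt.contDiffOn (le_refl 2) (by simp)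
  have hdiff : ∀ᶠ y in nhds (0 : EuclideanSpace ℝ (Fin k)), DifferentiableAt ℝ G y := by
    filter_upwards [interior_mem_nhds.2 hu0] with y hy
    have hy' : u0 ∈ nhds y := mem_nhds_iff.2 ⟨interior u0, interior_subset, isOpen_interior, hy⟩
    exact (hu0cd.contDiffAt hy').differentiableAt (by norm_num)
  have hB : HasFDerivAt (fderiv ℝ G) (fderiv ℝ (fderiv ℝ G) 0) 0 := by
    have h1 : ContDiffAt ℝ 1 (fderiv ℝ G) 0 := hCAt.fderiv_right (by norm_num)
    exact (h1.differentiableAt (by norm_num)).hasFDerivAt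
  set B := fderiv ℝ (fderiv ℝ G) 0 with hBdef
  set D := fderiv ℝ G 0 with hDdef
  have htaylor := taylor2_isLittleO hdiff hB
  set I := ∫ x in ball (0 : EuclideanSpace ℝ (Fin k)) 1, B x x with hIdef
  have hVnn : 0 ≤ unitBallVol k := ENNReal.toReal_nonneg
  have hIc : unitBallVol k *
      (∑ i : Fin k, iteratedFDeriv ℝ 2 G 0
        ![EuclideanSpace.single i 1, EuclideanSpace.single i 1]) / (2 * (k + 2)) = I / 2 := by
    have hit : ∀ i : Fin k, iteratedFDeriv ℝ 2 G 0
        ![EuclideanSpace.single i 1, EuclideanSpace.single i 1]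
        = B (EuclideanSpace.single i 1) (EuclideanSpace.single i 1) := by
      intro i
      rw [iteratedFDeriv_two_apply]
      simp
      rfl
    rw [Finset.sum_congr rfl fun i _ => hit i, hIdef, integral_ball_bilin hk B]
    rw [mul_one_div, div_mul_eq_mul_div, div_div, mul_comm ((k:ℝ)+2) 2]
  -- continuity and integrability of G near 0
  obtain ⟨δ0, hδ0pos, hδ0⟩ := Metric.mem_nhds_iff.1 hs
  have hGcont : ContinuousOn G (ball (0 : EuclideanSpace ℝ (Fin k)) δ0) :=
    hGs.continuousOn.mono hδ0
  have hGint : ∀ r, 0 < r → r ≤ δ0 / 2 →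
      IntegrableOn G (ball (0 : EuclideanSpace ℝ (Fin k)) r) volume := by
    intro r hrpos hrle
    have hsub : closedBall (0 : EuclideanSpace ℝ (Fin k)) r ⊆ ball 0 δ0 := by
      intro x hx
      rw [mem_closedBall_zero_iff] at hx
      rw [mem_ball_zero_iff]
      linarith
    exact ((hGcont.mono hsub).integrableOn_compact (isCompact_closedBall 0 r)).mono_set
      ball_subset_closedBall
  set hrem : EuclideanSpace ℝ (Fin k) → ℝ := fun x => G x - G 0 - D x - B x x / 2 with hremdef
  have hcontQ : Continuous fun x : EuclideanSpace ℝ (Fin k) => B x x :=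
    B.continuous₂.comp (continuous_id.prodMk continuous_id)
  have hrem_int : ∀ r, 0 < r → r ≤ δ0 / 2 →
      IntegrableOn hrem (ball (0 : EuclideanSpace ℝ (Fin k)) r) volume := by
    intro r hrpos hrle
    exact (((hGint r hrpos hrle).sub (integrableOn_ball_of_continuous continuous_const r)).sub
        (integrableOn_ball_of_continuous D.continuous r)).sub
      (integrableOn_ball_of_continuous (hcontQ.div_const 2) r)
  have hform : ∀ r, 0 < r → r ≤ δ0 / 2 →
      (∫ x in ball (0 : EuclideanSpace ℝ (Fin k)) r, G x) - unitBallVol k * G 0 * r ^ k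
        = r ^ (k + 2) * (I / 2) + ∫ x in ball (0 : EuclideanSpace ℝ (Fin k)) r, hrem x := by
    intro r hrpos hrle
    have h1 : (∫ x in ball (0 : EuclideanSpace ℝ (Fin k)) r, G x)
        = ∫ x in ball (0 : EuclideanSpace ℝ (Fin k)) r,
            (G 0 + D x + B x x / 2 + hrem x) :=
      integral_congr_ae (Filter.Eventually.of_forall fun x => by simp only [hremdef]; ring)
    have hi1 : IntegrableOn (fun _ : EuclideanSpace ℝ (Fin k) => G 0)
        (ball (0 : EuclideanSpace ℝ (Fin k)) r) volume :=
      integrableOn_ball_of_continuous continuous_const r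
    have hi2 : IntegrableOn (fun x : EuclideanSpace ℝ (Fin k) => D x)
        (ball (0 : EuclideanSpace ℝ (Fin k)) r) volume :=
      integrableOn_ball_of_continuous D.continuous r
    have hi3 : IntegrableOn (fun x : EuclideanSpace ℝ (Fin k) => B x x / 2)
        (ball (0 : EuclideanSpace ℝ (Fin k)) r) volume :=
      integrableOn_ball_of_continuous (hcontQ.div_const 2) r
    have hi4 := hrem_int r hrpos hrle
    have hi12 : IntegrableOn (fun x : EuclideanSpace ℝ (Fin k) => G 0 + D x)
        (ball (0 : EuclideanSpace ℝ (Fin k)) r) volume := by exact hi1.add hi2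
    have hi123 : IntegrableOn (fun x : EuclideanSpace ℝ (Fin k) => G 0 + D x + B x x / 2)
        (ball (0 : EuclideanSpace ℝ (Fin k)) r) volume := by exact hi12.add hi3
    rw [h1, integral_add hi123 hi4, integral_add hi12 hi3,
      integral_add hi1 hi2, setIntegral_const, integral_ball_linear D r, integral_div]
    rw [measureReal_def, vol_ball hk hrpos.le, integral_ball_bilin_scale B hrpos, smul_eq_mul, ← hIdef]
    ring
  -- remainder term tends to zero
  have hrem0 : Tendsto (fun r : ℝ => (r⁻¹) ^ (k + 2) *
      ∫ x in ball (0 : EuclideanSpace ℝ (Fin k)) r, hrem x)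
      (nhdsWithin 0 (Set.Ioi 0)) (nhds 0) := by
    rw [NormedAddCommGroup.tendsto_nhds_zero]
    intro ε hε
    set ε' := ε / (unitBallVol k + 1) with hε'def
    have hε' : 0 < ε' := by positivity
    have hTl := (Asymptotics.isLittleO_iff.1 htaylor) hε'
    obtain ⟨δ1, hδ1pos, hδ1⟩ := Metric.eventually_nhds_iff_ball.1 hTl
    have hmem : Set.Ioo (0:ℝ) (min δ1 (δ0 / 2)) ∈ nhdsWithin (0:ℝ) (Set.Ioi 0) :=
      Ioo_mem_nhdsGT_of_mem ⟨le_rfl, by positivity⟩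
    filter_upwards [hmem] with r hr
    obtain ⟨hrpos, hrlt⟩ := hr
    have hrδ1 : r ≤ δ1 := le_of_lt (lt_of_lt_of_le hrlt (min_le_left _ _))
    have hrδ0 : r ≤ δ0 / 2 := le_of_lt (lt_of_lt_of_le hrlt (min_le_right _ _))
    have hbound : ∀ x ∈ ball (0 : EuclideanSpace ℝ (Fin k)) r, ‖hrem x‖ ≤ ε' * r ^ 2 := by
      intro x hx
      rw [mem_ball_zero_iff] at hx
      have hxδ1 : x ∈ ball (0 : EuclideanSpace ℝ (Fin k)) δ1 :=
        mem_ball_zero_iff.2 (lt_of_lt_of_le hx hrδ1)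
      have := hδ1 x hxδ1
      calc ‖hrem x‖ ≤ ε' * ‖‖x‖ ^ 2‖ := this
        _ = ε' * ‖x‖ ^ 2 := by rw [Real.norm_of_nonneg (sq_nonneg _)]
        _ ≤ ε' * r ^ 2 := by
            have : ‖x‖ ^ 2 ≤ r ^ 2 := by nlinarith [norm_nonneg x]
            exact mul_le_mul_of_nonneg_left this hε'.le
    have hmeas : AEStronglyMeasurable hrem
        (volume.restrict (ball (0 : EuclideanSpace ℝ (Fin k)) r)) :=
      (hrem_int r hrpos hrδ0).aestronglyMeasurable
    have hI := norm_setIntegral_le_of_norm_le_const (μ := volume) measure_ball_lt_top hbound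
    rw [measureReal_def, vol_ball hk hrpos.le] at hI
    have hr0 : (r:ℝ) ≠ 0 := hrpos.ne'
    have hkey : ‖(r⁻¹) ^ (k + 2) *
        ∫ x in ball (0 : EuclideanSpace ℝ (Fin k)) r, hrem x‖
        ≤ ε' * unitBallVol k := by
      rw [norm_mul, norm_pow, norm_inv, Real.norm_of_nonneg hrpos.le]
      calc (r⁻¹) ^ (k + 2) * ‖∫ x in ball (0 : EuclideanSpace ℝ (Fin k)) r, hrem x‖
          ≤ (r⁻¹) ^ (k + 2) * (ε' * r ^ 2 * (r ^ k * unitBallVol k)) := by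
            exact mul_le_mul_of_nonneg_left hI (by positivity)
        _ = ε' * unitBallVol k := by
            field_simp
            have h2 : r ^ 2 * r⁻¹ ^ 2 = 1 := by rw [← mul_pow, mul_inv_cancel₀ hr0, one_pow]
            have hk' : r ^ k * r⁻¹ ^ k = 1 := by rw [← mul_pow, mul_inv_cancel₀ hr0, one_pow]
            calc _ = (r ^ 2 * r⁻¹ ^ 2) * (r ^ k * r⁻¹ ^ k) * unitBallVol k := by ring
              _ = unitBallVol k := by rw [h2, hk', one_mul, one_mul]
    refine lt_of_le_of_lt hkey ?_
    calc ε' * unitBallVol k < ε' * (unitBallVol k + 1) := by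
          exact mul_lt_mul_of_pos_left (by linarith) hε'
      _ = ε := by
          rw [hε'def]
          field_simp
  -- the function of r tends to I/2
  have hF : Tendsto (fun r : ℝ => (r⁻¹) ^ (k + 2) *
      ((∫ x in ball (0 : EuclideanSpace ℝ (Fin k)) r, G x)
        - unitBallVol k * G 0 * r ^ k))
      (nhdsWithin 0 (Set.Ioi 0)) (nhds (I / 2)) := by
    have h0 : Tendsto (fun r : ℝ => I / 2 + (r⁻¹) ^ (k + 2) *
        ∫ x in ball (0 : EuclideanSpace ℝ (Fin k)) r, hrem x)
        (nhdsWithin 0 (Set.Ioi 0)) (nhds (I / 2)) := by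
      simpa using Filter.Tendsto.const_add (I / 2) hrem0
    refine h0.congr' ?_
    have hmem : Set.Ioo (0:ℝ) (δ0 / 2) ∈ nhdsWithin (0:ℝ) (Set.Ioi 0) :=
      Ioo_mem_nhdsGT_of_mem ⟨le_rfl, by positivity⟩
    filter_upwards [hmem] with r hr
    obtain ⟨hrpos, hrlt⟩ := hr
    rw [hform r hrpos hrlt.le]
    have hr0 : (r:ℝ) ≠ 0 := hrpos.ne'
    field_simp
    have e : r ^ 2 * r ^ k * r⁻¹ ^ 2 * r⁻¹ ^ k = 1 := by
      have h2 : r ^ 2 * r⁻¹ ^ 2 = 1 := by rw [← mul_pow, mul_inv_cancel₀ hr0, one_pow]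
      have hk' : r ^ k * r⁻¹ ^ k = 1 := by rw [← mul_pow, mul_inv_cancel₀ hr0, one_pow]
      calc r ^ 2 * r ^ k * r⁻¹ ^ 2 * r⁻¹ ^ k = (r ^ 2 * r⁻¹ ^ 2) * (r ^ k * r⁻¹ ^ k) := by ring
        _ = 1 := by rw [h2, hk', one_mul]
    linear_combination (-I) * e
  -- compose with u ↦ 1/u
  have hcomp : Tendsto (fun u : ℝ => 1 / u) atTop (nhdsWithin (0:ℝ) (Set.Ioi 0)) := by
    rw [tendsto_nhdsWithin_iff]
    constructor
    · simpa [one_div] using (tendsto_inv_atTop_zero (𝕜 := ℝ))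
    · filter_upwards [eventually_gt_atTop (0:ℝ)] with u hu
      exact Set.mem_Ioi.2 (by positivity)
  have hfin := hF.comp hcomp
  rw [hIc]
  refine Tendsto.congr' ?_ hfin
  filter_upwards [eventually_gt_atTop (0:ℝ)] with u hu
  simp only [Function.comp_apply, one_div, inv_inv, inv_pow]
  rw [div_eq_mul_inv]
end

section
/- Let F_{m,k} denote the tail of the F-distribution with m ≥ 1 and k ≥ 2 degrees of freedom. Then F_{m,k}(u) = (2 (k/m)^{k/2}) / (k B(m/2, k/2)) · [ u^{−k/2} − (k²(k+m))/(2m(k+2)) · u^{−(k/2+1)} ] + o(u^{−(k/2+1)}) as u → ∞. In particular, u^{k/2} F_{m,k}(u) → 2 (k/m)^{k/2}/(k B(m/2, k/2)). -/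
open MeasureTheory Filter Real


lemma hasDeriv_one_add_rpow (q t : ℝ) (ht : 0 < 1 + t) :
    HasDerivAt (fun s : ℝ => (1 + s) ^ q) (q * (1 + t) ^ (q - 1)) t := by
  have h := (Real.hasDerivAt_rpow_const (x := 1 + t) (p := q) (Or.inl ht.ne')).comp t
    ((hasDerivAt_id t).const_add 1)
  exact h.congr_deriv (by simp)

lemma lin_deriv (p : ℝ) (s : ℝ) : HasDerivAt (fun s : ℝ => 1 - p * s) (-p) s := by
  simpa using ((hasDerivAt_id s).const_mul p).const_sub 1

lemma quad_deriv (p : ℝ) (s : ℝ) :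
    HasDerivAt (fun s : ℝ => p * (p + 1) / 2 * s ^ 2) (p * (p + 1) * s) s := by
  have h := (hasDerivAt_pow 2 s).const_mul (p * (p + 1) / 2)
  refine h.congr_deriv ?_
  ring

lemma bern_deriv (p s : ℝ) (hds : 0 < 1 + s) :
    HasDerivAt (fun s : ℝ => (1 + s) ^ (-p) - (1 - p * s))
      ((-p) * (1 + s) ^ (-p - 1) - (-p)) s :=
  (hasDeriv_one_add_rpow (-p) s hds).sub (lin_deriv p s)

lemma taylor_deriv (p s : ℝ) (hds : 0 < 1 + s) :
    HasDerivAt (fun s : ℝ => 1 - p * s + p * (p + 1) / 2 * s ^ 2 - (1 + s) ^ (-p))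
      ((-p + p * (p + 1) * s) - (-p) * (1 + s) ^ (-p - 1)) s :=
  ((lin_deriv p s).add (quad_deriv p s)).sub (hasDeriv_one_add_rpow (-p) s hds)

lemma bern_neg (p : ℝ) (hp : 0 ≤ p) : ∀ t : ℝ, 0 ≤ t → 1 - p * t ≤ (1 + t) ^ (-p) := by
  intro t ht
  have key : MonotoneOn (fun s : ℝ => (1 + s) ^ (-p) - (1 - p * s)) (Set.Ici 0) := by
    apply monotoneOn_of_deriv_nonneg (convex_Ici 0)
    · apply ContinuousOn.sub _ (by fun_prop)
      intro s hs
      exact ((hasDeriv_one_add_rpow (-p) s (by simp at hs ⊢; linarith)).continuousAt).continuousWithinAt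
    · intro s hs
      simp only [interior_Ici, Set.mem_Ioi] at hs
      exact (bern_deriv p s (by linarith)).differentiableAt.differentiableWithinAt
    · intro s hs
      simp only [interior_Ici, Set.mem_Ioi] at hs
      have hds : 0 < 1 + s := by linarith
      rw [(bern_deriv p s hds).deriv]
      have h1 : (1 + s) ^ (-p - 1) ≤ 1 :=
        Real.rpow_le_one_of_one_le_of_nonpos (by linarith) (by linarith)
      have h2 : 0 ≤ (1 + s) ^ (-p - 1) := (Real.rpow_pos_of_pos hds _).le
      nlinarith
  have := key (Set.self_mem_Ici) (Set.mem_Ici.2 ht) ht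
  simp at this
  linarith

lemma taylor_neg (p : ℝ) (hp : 0 ≤ p) : ∀ t : ℝ, 0 ≤ t →
    (1 + t) ^ (-p) ≤ 1 - p * t + p * (p + 1) / 2 * t ^ 2 := by
  intro t ht
  have key : MonotoneOn (fun s : ℝ => 1 - p * s + p * (p + 1) / 2 * s ^ 2 - (1 + s) ^ (-p))
      (Set.Ici 0) := by
    apply monotoneOn_of_deriv_nonneg (convex_Ici 0)
    · apply ContinuousOn.sub (by fun_prop)
      intro s hs
      exact ((hasDeriv_one_add_rpow (-p) s (by simp at hs; linarith)).continuousAt).continuousWithinAt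
    · intro s hs
      simp only [interior_Ici, Set.mem_Ioi] at hs
      exact (taylor_deriv p s (by linarith)).differentiableAt.differentiableWithinAt
    · intro s hs
      simp only [interior_Ici, Set.mem_Ioi] at hs
      have hds : 0 < 1 + s := by linarith
      rw [(taylor_deriv p s hds).deriv]
      have hb := bern_neg (p + 1) (by linarith) s hs.le
      have he : (1 + s) ^ (-(p + 1)) = (1 + s) ^ (-p - 1) := by ring_nf
      rw [he] at hb
      nlinarith [Real.rpow_pos_of_pos hds (-p - 1)]
  have := key (Set.self_mem_Ici) (Set.mem_Ici.2 ht) ht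
  simp at this
  linarith
lemma pt_eq (c p C x q : ℝ) (hc : 0 < c) (hx : 0 < x) :
    C * x ^ q * (1 + c * x) ^ (-p) =
      C * c ^ (-p) * x ^ (q - p) * (1 + 1 / (c * x)) ^ (-p) := by
  have hcx : 0 < c * x := mul_pos hc hx
  have h1 : 1 + c * x = c * x * (1 + 1 / (c * x)) := by field_simp; ring
  have h2 : (0:ℝ) ≤ 1 + 1 / (c * x) := by positivity
  rw [h1, Real.mul_rpow hcx.le h2, Real.mul_rpow hc.le hx.le, sub_eq_add_neg,
    Real.rpow_add hx]
  ring

lemma err_bound (a p c x : ℝ) (r : ℝ) (ha : 0 ≤ a) (hc : 0 < c) (hp : 0 ≤ p) (hx : 0 < x) :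
    0 ≤ a * x ^ r * (1 + 1 / (c * x)) ^ (-p) - (a * x ^ r - a * p / c * x ^ (r - 1)) ∧
    a * x ^ r * (1 + 1 / (c * x)) ^ (-p) - (a * x ^ r - a * p / c * x ^ (r - 1)) ≤
      a * (p * (p + 1) / (2 * c ^ 2)) * x ^ (r - 2) := by
  have hcx : 0 < c * x := mul_pos hc hx
  set t : ℝ := 1 / (c * x) with htdef
  have ht : 0 ≤ t := by positivity
  have hb := bern_neg p hp t ht
  have hT := taylor_neg p hp t ht
  have hxr : (0:ℝ) ≤ a * x ^ r := by positivity
  have e1 : a * p / c * x ^ (r - 1) = a * x ^ r * (p * t) := by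
    rw [Real.rpow_sub hx, Real.rpow_one, htdef]
    field_simp
  have e2 : a * (p * (p + 1) / (2 * c ^ 2)) * x ^ (r - 2) =
      a * x ^ r * (p * (p + 1) / 2 * t ^ 2) := by
    rw [show r - 2 = r - 1 - 1 by ring, Real.rpow_sub hx, Real.rpow_sub hx, Real.rpow_one, htdef]
    field_simp
  constructor
  · rw [e1]
    nlinarith [mul_le_mul_of_nonneg_left hb hxr]
  · rw [e1, e2]
    nlinarith [mul_le_mul_of_nonneg_left hT hxr]

lemma tail_est (c p C s : ℝ) (hc : 0 < c) (hp : 0 < p) (hs : 0 < s) (hC : 0 ≤ C) (u : ℝ)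
    (hu : 0 < u) :
    0 ≤ (∫ x in Set.Ioi u, C * x ^ (p - s - 1) * (1 + c * x) ^ (-p)) -
        (C * c ^ (-p) / s * u ^ (-s) - C * c ^ (-p) * p / c / (s + 1) * u ^ (-s - 1)) ∧
    (∫ x in Set.Ioi u, C * x ^ (p - s - 1) * (1 + c * x) ^ (-p)) -
        (C * c ^ (-p) / s * u ^ (-s) - C * c ^ (-p) * p / c / (s + 1) * u ^ (-s - 1)) ≤
      C * c ^ (-p) * (p * (p + 1) / (2 * c ^ 2)) / (s + 2) * u ^ (-s - 2) := by
  set a : ℝ := C * c ^ (-p) with hadef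
  have ha : 0 ≤ a := by positivity
  set q : ℝ := p - s - 1 with hqdef
  have hqp : q - p = -s - 1 := by rw [hqdef]; ring
  set b : ℝ := a * p / c with hbdef
  -- pointwise form of the integrand
  have hfx : ∀ x ∈ Set.Ioi u, C * x ^ q * (1 + c * x) ^ (-p) =
      a * x ^ (-s - 1) * (1 + 1 / (c * x)) ^ (-p) := by
    intro x hx
    rw [pt_eq c p C x q hc (hu.trans hx), hqp, hadef]
  -- integrabilities
  have hint_rpow : ∀ r : ℝ, r < -1 → IntegrableOn (fun x : ℝ => x ^ r) (Set.Ioi u) :=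
    fun r hr => integrableOn_Ioi_rpow_of_lt hr hu
  have hcont : ContinuousOn (fun x : ℝ => C * x ^ q * (1 + c * x) ^ (-p)) (Set.Ioi u) := by
    apply ContinuousOn.mul
    · apply ContinuousOn.mul continuousOn_const
      intro x hx
      exact (Real.continuousAt_rpow_const x q (Or.inl (hu.trans hx).ne')).continuousWithinAt
    · apply ContinuousOn.rpow_const
      · fun_prop
      · intro x hx
        have hx0 := hu.trans hx
        exact Or.inl (by positivity)
  have hintf : IntegrableOn (fun x : ℝ => C * x ^ q * (1 + c * x) ^ (-p)) (Set.Ioi u) := by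
    apply Integrable.mono' (((hint_rpow (-s - 1) (by linarith)).const_mul a))
      (hcont.aestronglyMeasurable measurableSet_Ioi)
    refine (ae_restrict_iff' measurableSet_Ioi).2 (Filter.Eventually.of_forall fun x hx => ?_)
    have hx0 : 0 < x := hu.trans hx
    rw [hfx x hx]
    have h1 : (0:ℝ) ≤ 1 + 1 / (c * x) := by positivity
    have h2 : (1 + 1 / (c * x)) ^ (-p) ≤ 1 := by
      apply Real.rpow_le_one_of_one_le_of_nonpos
      · have : 0 < 1 / (c * x) := by positivity
        linarith
      · linarith
    have h3 : (0:ℝ) ≤ a * x ^ (-s - 1) := by positivity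
    rw [Real.norm_eq_abs, abs_of_nonneg (by positivity)]
    calc a * x ^ (-s - 1) * (1 + 1 / (c * x)) ^ (-p) ≤ a * x ^ (-s - 1) * 1 :=
          mul_le_mul_of_nonneg_left h2 h3
      _ = a * x ^ (-s - 1) := mul_one _
  have hinth : IntegrableOn (fun x : ℝ => a * x ^ (-s - 1) - b * x ^ (-s - 2)) (Set.Ioi u) :=
    ((hint_rpow (-s - 1) (by linarith)).const_mul a).sub
      ((hint_rpow (-s - 2) (by linarith)).const_mul b)
  -- integral of h
  have ihh : (∫ x in Set.Ioi u, (a * x ^ (-s - 1) - b * x ^ (-s - 2))) =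
      a / s * u ^ (-s) - b / (s + 1) * u ^ (-s - 1) := by
    rw [integral_sub ((hint_rpow (-s - 1) (by linarith)).const_mul a)
        ((hint_rpow (-s - 2) (by linarith)).const_mul b),
      integral_const_mul, integral_const_mul,
      integral_Ioi_rpow_of_lt (by linarith) hu, integral_Ioi_rpow_of_lt (by linarith) hu,
      show -s - 1 + 1 = -s by ring, show -s - 2 + 1 = -s - 1 by ring]
    have h1 : (-s : ℝ) ≠ 0 := by linarith
    have h2 : (-s - 1 : ℝ) ≠ 0 := by linarith
    have h3 : (s + 1 : ℝ) ≠ 0 := by linarith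
    field_simp
    ring
  -- difference as an integral
  have hdiff : (∫ x in Set.Ioi u, C * x ^ q * (1 + c * x) ^ (-p)) -
      (a / s * u ^ (-s) - b / (s + 1) * u ^ (-s - 1)) =
      ∫ x in Set.Ioi u, (C * x ^ q * (1 + c * x) ^ (-p) -
        (a * x ^ (-s - 1) - b * x ^ (-s - 2))) := by
    rw [integral_sub hintf hinth, ihh]
  have hptlo : ∀ x ∈ Set.Ioi u, 0 ≤ C * x ^ q * (1 + c * x) ^ (-p) -
      (a * x ^ (-s - 1) - b * x ^ (-s - 2)) := by
    intro x hx
    have hx0 : 0 < x := hu.trans hx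
    rw [hfx x hx]
    have := (err_bound a p c x (-s - 1) ha hc hp.le hx0).1
    rw [show (-s - 1 - 1 : ℝ) = -s - 2 by ring] at this
    rw [hbdef]
    linarith
  have hpthi : ∀ x ∈ Set.Ioi u, C * x ^ q * (1 + c * x) ^ (-p) -
      (a * x ^ (-s - 1) - b * x ^ (-s - 2)) ≤
      a * (p * (p + 1) / (2 * c ^ 2)) * x ^ (-s - 3) := by
    intro x hx
    have hx0 : 0 < x := hu.trans hx
    rw [hfx x hx]
    have := (err_bound a p c x (-s - 1) ha hc hp.le hx0).2
    rw [show (-s - 1 - 1 : ℝ) = -s - 2 by ring,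
      show (-s - 1 - 2 : ℝ) = -s - 3 by ring] at this
    rw [hbdef]
    linarith
  constructor
  · rw [show C * c ^ (-p) / s * u ^ (-s) - C * c ^ (-p) * p / c / (s + 1) * u ^ (-s - 1)
        = a / s * u ^ (-s) - b / (s + 1) * u ^ (-s - 1) by rw [hbdef, hadef], hdiff]
    exact setIntegral_nonneg measurableSet_Ioi hptlo
  · rw [show C * c ^ (-p) / s * u ^ (-s) - C * c ^ (-p) * p / c / (s + 1) * u ^ (-s - 1)
        = a / s * u ^ (-s) - b / (s + 1) * u ^ (-s - 1) by rw [hbdef, hadef], hdiff]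
    calc (∫ x in Set.Ioi u, (C * x ^ q * (1 + c * x) ^ (-p) -
          (a * x ^ (-s - 1) - b * x ^ (-s - 2))))
        ≤ ∫ x in Set.Ioi u, a * (p * (p + 1) / (2 * c ^ 2)) * x ^ (-s - 3) := by
          apply setIntegral_mono_on (hintf.sub hinth)
            ((hint_rpow (-s - 3) (by linarith)).const_mul _) measurableSet_Ioi
          exact hpthi
      _ = C * c ^ (-p) * (p * (p + 1) / (2 * c ^ 2)) / (s + 2) * u ^ (-s - 2) := by
          rw [integral_const_mul, integral_Ioi_rpow_of_lt (by linarith) hu,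
            show -s - 3 + 1 = -s - 2 by ring, hadef]
          have h1 : (-s - 2 : ℝ) ≠ 0 := by linarith
          have h2 : (s + 2 : ℝ) ≠ 0 := by linarith
          field_simp
          ring

/-- Tail of the F-distribution with `m` and `k` degrees of freedom. -/
noncomputable def fTail (m k : ℕ) (u : ℝ) : ℝ :=
  ∫ x in Set.Ioi u,
    Real.Gamma (((m : ℝ) + k) / 2) / (Real.Gamma ((m : ℝ) / 2) * Real.Gamma ((k : ℝ) / 2)) *
      ((m : ℝ) / k) ^ ((m : ℝ) / 2) * x ^ ((m : ℝ) / 2 - 1) *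
      (1 + (m : ℝ) / k * x) ^ (-(((m : ℝ) + k) / 2))

/-- The Beta function, via Gamma functions. -/
noncomputable def betaFn (a b : ℝ) : ℝ := Real.Gamma a * Real.Gamma b / Real.Gamma (a + b)

theorem stmt16 (m k : ℕ) (hm : 1 ≤ m) (hk : 2 ≤ k) :
    Tendsto (fun u : ℝ =>
        (fTail m k u -
          2 * ((k : ℝ) / m) ^ ((k : ℝ) / 2) / (k * betaFn ((m : ℝ) / 2) ((k : ℝ) / 2)) *
            (u ^ (-((k : ℝ) / 2)) -
              (k : ℝ) ^ 2 * ((k : ℝ) + m) / (2 * m * ((k : ℝ) + 2)) *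
                u ^ (-((k : ℝ) / 2 + 1)))) / u ^ (-((k : ℝ) / 2 + 1)))
      atTop (nhds 0) ∧
    Tendsto (fun u : ℝ => u ^ ((k : ℝ) / 2) * fTail m k u)
      atTop
      (nhds (2 * ((k : ℝ) / m) ^ ((k : ℝ) / 2) /
        (k * betaFn ((m : ℝ) / 2) ((k : ℝ) / 2)))) := by
  have hM : (1:ℝ) ≤ (m:ℝ) := by exact_mod_cast hm
  have hK : (2:ℝ) ≤ (k:ℝ) := by exact_mod_cast hk
  set M : ℝ := (m:ℝ) with hMdef
  set K : ℝ := (k:ℝ) with hKdef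
  have hM0 : 0 < M := by linarith
  have hK0 : 0 < K := by linarith
  have hc : 0 < M / K := div_pos hM0 hK0
  have hp : 0 < (M + K) / 2 := by linarith
  have hs : 0 < K / 2 := by linarith
  have hG1 : 0 < Real.Gamma (M / 2) := Real.Gamma_pos_of_pos (by linarith)
  have hG2 : 0 < Real.Gamma (K / 2) := Real.Gamma_pos_of_pos (by linarith)
  have hG3 : 0 < Real.Gamma ((M + K) / 2) := Real.Gamma_pos_of_pos (by linarith)
  set Cv : ℝ := Real.Gamma ((M + K) / 2) / (Real.Gamma (M / 2) * Real.Gamma (K / 2)) *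
    (M / K) ^ (M / 2) with hCvdef
  have hCv : 0 ≤ Cv := by positivity
  set Cc : ℝ := Cv * (M / K) ^ (-((M + K) / 2)) with hCcdef
  set A : ℝ := 2 * (K / M) ^ (K / 2) / (K * betaFn (M / 2) (K / 2)) with hAdef
  set B₁ : ℝ := K ^ 2 * (K + M) / (2 * M * (K + 2)) with hB1def
  -- beta function value
  have hbeta : betaFn (M / 2) (K / 2) =
      Real.Gamma (M / 2) * Real.Gamma (K / 2) / Real.Gamma ((M + K) / 2) := by
    rw [betaFn, show M / 2 + K / 2 = (M + K) / 2 by ring]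
  -- the rpow collapse
  have hcc : (M / K) ^ (M / 2) * (M / K) ^ (-((M + K) / 2)) = (K / M) ^ (K / 2) := by
    rw [← Real.rpow_add hc, show M / 2 + -((M + K) / 2) = -(K / 2) by ring,
      Real.rpow_neg hc.le, show K / M = (M / K)⁻¹ by rw [inv_div],
      Real.inv_rpow hc.le]
  have hCc : Cc = (K / M) ^ (K / 2) * (Real.Gamma ((M + K) / 2) /
      (Real.Gamma (M / 2) * Real.Gamma (K / 2))) := by
    rw [hCcdef, hCvdef, mul_assoc, hcc]; ring
  have hA : A = Cc / (K / 2) := by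
    rw [hAdef, hCc, hbeta]
    field_simp
  have hAB : A * B₁ = Cc * ((M + K) / 2) / (M / K) / (K / 2 + 1) := by
    rw [hA, hB1def]
    field_simp
    ring
  -- main term rewrite
  have hMain : ∀ u : ℝ,
      A * (u ^ (-(K / 2)) - B₁ * u ^ (-(K / 2 + 1))) =
      Cc / (K / 2) * u ^ (-(K / 2)) -
        Cc * ((M + K) / 2) / (M / K) / (K / 2 + 1) * u ^ (-(K / 2) - 1) := by
    intro u
    rw [show -(K / 2 + 1) = -(K / 2) - 1 by ring, mul_sub, ← mul_assoc, hAB, hA]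
  -- the tail estimate
  have key : ∀ u : ℝ, 0 < u →
      0 ≤ fTail m k u - A * (u ^ (-(K / 2)) - B₁ * u ^ (-(K / 2 + 1))) ∧
      fTail m k u - A * (u ^ (-(K / 2)) - B₁ * u ^ (-(K / 2 + 1))) ≤
        Cc * ((M + K) / 2 * ((M + K) / 2 + 1) / (2 * (M / K) ^ 2)) / (K / 2 + 2) *
          u ^ (-(K / 2) - 2) := by
    intro u hu
    have h := tail_est (M / K) ((M + K) / 2) Cv (K / 2) hc hp hs hCv u hu
    rw [show (M + K) / 2 - K / 2 - 1 = M / 2 - 1 by ring] at h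
    have hft : fTail m k u = ∫ x in Set.Ioi u, Cv * x ^ (M / 2 - 1) *
        (1 + M / K * x) ^ (-((M + K) / 2)) := rfl
    rw [hMain u, hft]
    rw [show -(K / 2) - 1 = -(K / 2) - 1 by ring]
    constructor
    · have := h.1
      rw [hCcdef]
      convert this using 2 <;> ring
    · have := h.2
      rw [hCcdef]
      convert this using 2 <;> ring
  set D : ℝ := Cc * ((M + K) / 2 * ((M + K) / 2 + 1) / (2 * (M / K) ^ 2)) / (K / 2 + 2)
    with hDdef
  constructor
  · -- first limit
    apply squeeze_zero' (g := fun u : ℝ => D / u)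
    · filter_upwards [eventually_ge_atTop (1:ℝ)] with u hu
      have hu0 : (0:ℝ) < u := by linarith
      exact div_nonneg ((key u hu0).1) (Real.rpow_pos_of_pos hu0 _).le
    · filter_upwards [eventually_ge_atTop (1:ℝ)] with u hu
      have hu0 : (0:ℝ) < u := by linarith
      rw [div_le_div_iff₀ (Real.rpow_pos_of_pos hu0 _) hu0]
      have e1 : u ^ (-(K / 2) - 2) * u = u ^ (-(K / 2 + 1)) := by
        rw [show -(K / 2) - 2 = -(K / 2 + 1) + -1 by ring, Real.rpow_add hu0,
          Real.rpow_neg_one]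
        field_simp
      calc (fTail m k u - A * (u ^ (-(K / 2)) - B₁ * u ^ (-(K / 2 + 1)))) * u
          ≤ D * u ^ (-(K / 2) - 2) * u :=
            mul_le_mul_of_nonneg_right ((key u hu0).2) hu0.le
        _ = D * u ^ (-(K / 2 + 1)) := by rw [mul_assoc, e1]
    · exact Tendsto.div_atTop tendsto_const_nhds tendsto_id
  · -- second limit
    have decomp : ∀ u : ℝ, 0 < u → u ^ (K / 2) * fTail m k u =
        u ^ (K / 2) * (fTail m k u - A * (u ^ (-(K / 2)) - B₁ * u ^ (-(K / 2 + 1)))) +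
          (A - A * B₁ / u) := by
      intro u hu0
      have e1 : u ^ (K / 2) * u ^ (-(K / 2)) = 1 := by
        rw [← Real.rpow_add hu0]; simp
      have e2 : u ^ (K / 2) * u ^ (-(K / 2 + 1)) = u⁻¹ := by
        rw [← Real.rpow_add hu0, show K / 2 + -(K / 2 + 1) = -1 by ring, Real.rpow_neg_one]
      have : u ^ (K / 2) * (A * (u ^ (-(K / 2)) - B₁ * u ^ (-(K / 2 + 1)))) =
          A - A * B₁ / u := by
        rw [mul_sub, mul_sub]
        rw [show u ^ (K / 2) * (A * u ^ (-(K / 2))) = A * (u ^ (K / 2) * u ^ (-(K / 2))) by ring,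
          show u ^ (K / 2) * (A * (B₁ * u ^ (-(K / 2 + 1)))) =
            A * B₁ * (u ^ (K / 2) * u ^ (-(K / 2 + 1))) by ring, e1, e2]
        rw [mul_one, div_eq_mul_inv]
      linarith [this]
    apply tendsto_of_tendsto_of_tendsto_of_le_of_le'
      (g := fun u : ℝ => A - A * B₁ / u) (h := fun u : ℝ => D / u ^ (2:ℝ) + (A - A * B₁ / u))
    · have h1 : Tendsto (fun u : ℝ => A * B₁ / u) atTop (nhds 0) :=
        Tendsto.div_atTop tendsto_const_nhds tendsto_id
      simpa using tendsto_const_nhds.sub h1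
    · have h1 : Tendsto (fun u : ℝ => A * B₁ / u) atTop (nhds 0) :=
        Tendsto.div_atTop tendsto_const_nhds tendsto_id
      have h2 : Tendsto (fun u : ℝ => D / u ^ (2:ℝ)) atTop (nhds 0) :=
        Tendsto.div_atTop tendsto_const_nhds (tendsto_rpow_atTop (by norm_num))
      simpa using (h2.add (tendsto_const_nhds.sub h1))
    · filter_upwards [eventually_ge_atTop (1:ℝ)] with u hu
      have hu0 : (0:ℝ) < u := by linarith
      rw [decomp u hu0]
      have := (key u hu0).1
      nlinarith [Real.rpow_pos_of_pos hu0 (K / 2)]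
    · filter_upwards [eventually_ge_atTop (1:ℝ)] with u hu
      have hu0 : (0:ℝ) < u := by linarith
      rw [decomp u hu0]
      have h2 := (key u hu0).2
      have e3 : u ^ (K / 2) * u ^ (-(K / 2) - 2) = (u ^ (2:ℝ))⁻¹ := by
        rw [← Real.rpow_add hu0, show K / 2 + (-(K / 2) - 2) = -(2:ℝ) by ring,
          Real.rpow_neg hu0.le]
      have h3 : u ^ (K / 2) * (fTail m k u - A * (u ^ (-(K / 2)) - B₁ * u ^ (-(K / 2 + 1)))) ≤
          D / u ^ (2:ℝ) := by
        calc u ^ (K / 2) * (fTail m k u - A * (u ^ (-(K / 2)) - B₁ * u ^ (-(K / 2 + 1))))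
            ≤ u ^ (K / 2) * (D * u ^ (-(K / 2) - 2)) :=
              mul_le_mul_of_nonneg_left h2 (Real.rpow_pos_of_pos hu0 _).le
          _ = D / u ^ (2:ℝ) := by
              rw [show u ^ (K / 2) * (D * u ^ (-(K / 2) - 2)) =
                D * (u ^ (K / 2) * u ^ (-(K / 2) - 2)) by ring, e3, div_eq_mul_inv]
      linarith
end
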